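/- (C-regret via Maximal-in-Range restriction) Let 0 < C ≤ 1 and let X' ⊆ X be a nonempty subset such that max_{x∈X'} Σ_{t=1}^T f(x, y_t) ≥ C·max_{x∈X} Σ_{t=1}^T f(x, y_t). Suppose the restriction of Γ to the rows in X' is (κ',δ')-admissible with κ' ≥ 1 and 0 < δ' ≤ 1, let ε ≥ 0, set η = √(δ' / ((1+2ε)Tκ')), let α = (α_1,…,α_N) have independent coordinates each uniformly distributed on [0, 1/η], and suppose that for every α the sequence x_1(α),…,x_{T+1}(α) ∈ X' is an ε-approximate Generalized-FTPL trajectory within X' for α (the trajectory condition holding with the comparisons quantified over x ∈ X'), with each map α ↦ x_t(α) measurable. Then E[ C·max_{x∈X} Σ_{t=1}^T f(x, y_t) − Σ_{t=1}^T f(x_t(α), y_t) ] ≤ 3N√((1+2ε)Tκ'/δ') + εT. -/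

import Mathlib

open Finset MeasureTheory

lemma covering_lemma (c : ℝ) (hc : 0 ≤ c) :
    ∀ (k : ℕ) (S : Set ℝ), BddBelow S →
    (∀ g : ℕ → ℝ, (∀ i, g i ∈ S) → (∀ i < k, g i + c < g (i+1)) → False) →
    volume S ≤ ENNReal.ofReal (k * c) := by
  intro k
  induction k with
  | zero =>
    intro S _ h
    have : S = ∅ := by
      by_contra hne
      obtain ⟨a, ha⟩ := Set.nonempty_iff_ne_empty.2 hne
      exact h (fun _ => a) (fun _ => ha) (by omega)
    simp [this]
  | succ k ih =>
    intro S hbd h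
    rcases S.eq_empty_or_nonempty with rfl | hne
    · simp
    set m := sInf S with hm
    have hS' : volume (S ∩ Set.Ioi (m + c)) ≤ ENNReal.ofReal (k * c) := by
      refine ih _ (hbd.mono Set.inter_subset_left) ?_
      intro g hgS hgap
      have h0 : g 0 ∈ S ∩ Set.Ioi (m + c) := hgS 0
      have : m < g 0 - c := by
        have := h0.2
        simp only [Set.mem_Ioi] at this
        linarith
      obtain ⟨a, haS, halt⟩ := (csInf_lt_iff hbd hne).1 this
      refine h (fun i => if i = 0 then a else g (i - 1)) ?_ ?_
      · intro i
        by_cases hi : i = 0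
        · simpa [hi] using haS
        · simpa [hi] using (hgS (i - 1)).1
      · intro i hi
        rcases Nat.eq_zero_or_pos i with rfl | hipos
        · simpa using by linarith
        · have h1 : i ≠ 0 := by omega
          have h2 : i + 1 ≠ 0 := by omega
          simp only [h1, h2, if_neg, if_false]
          have : i - 1 < k := by omega
          have := hgap (i - 1) this
          have heq : i - 1 + 1 = i + 1 - 1 := by omega
          rw [heq] at this
          exact this
    have hcover : S ⊆ (S ∩ Set.Icc m (m + c)) ∪ (S ∩ Set.Ioi (m + c)) := by
      intro x hx
      by_cases hxc : x ≤ m + c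
      · exact Or.inl ⟨hx, csInf_le hbd hx, hxc⟩
      · exact Or.inr ⟨hx, by simpa using lt_of_not_ge hxc⟩
    calc volume S ≤ volume ((S ∩ Set.Icc m (m + c)) ∪ (S ∩ Set.Ioi (m + c))) :=
          measure_mono hcover
      _ ≤ volume (S ∩ Set.Icc m (m + c)) + volume (S ∩ Set.Ioi (m + c)) := measure_union_le _ _
      _ ≤ volume (Set.Icc m (m + c)) + ENNReal.ofReal (k * c) :=
          add_le_add (measure_mono Set.inter_subset_right) hS'
      _ = ENNReal.ofReal c + ENNReal.ofReal (k * c) := by rw [Real.volume_Icc]; ring_nf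
      _ = ENNReal.ofReal ((k + 1 : ℕ) * c) := by
          rw [← ENNReal.ofReal_add hc (by positivity)]
          congr 1
          push_cast
          ring

set_option maxHeartbeats 1000000 in
/-- **C-regret via Maximal-in-Range restriction.**
Let `0 < C ≤ 1` and let `X' ⊆ X` be a nonempty subset whose best action attains a
`C` fraction of the best action in `X`. If the restriction of `Γ` to `X'` is
`(κ',δ')`-admissible, `η = √(δ'/((1+2ε)Tκ'))`, the coordinates of `α` are i.i.d.
uniform on `[0,1/η]`, and `xtraj α` is an ε-approximate Generalized-FTPL trajectory
within `X'`, then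
`E[ C·max_{x∈X} Σ_t f(x,y_t) − Σ_t f(x_t(α),y_t) ] ≤ 3N√((1+2ε)Tκ'/δ') + εT`. -/
theorem c_regret_via_maximal_in_range
    {X Y : Type*} [Fintype X] [Nonempty X]
    (f : X → Y → ℝ) (hf : ∀ x y, f x y ∈ Set.Icc (0:ℝ) 1)
    (T : ℕ) (hT : 1 ≤ T) (y : ℕ → Y)
    (N : ℕ) (hN : 1 ≤ N)
    (Γ : X → Fin N → ℝ) (hΓ : ∀ x j, Γ x j ∈ Set.Icc (0:ℝ) 1)
    (C : ℝ) (hC0 : 0 < C) (hC1 : C ≤ 1)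
    (X' : Finset X) (hX' : X'.Nonempty)
    (hMIR : (X'.sup' hX' fun x => ∑ t ∈ Finset.Icc 1 T, f x (y t)) ≥
      C * (Finset.univ.sup' Finset.univ_nonempty fun x => ∑ t ∈ Finset.Icc 1 T, f x (y t)))
    (κ' : ℕ) (hκ' : 1 ≤ κ') (δ' : ℝ) (hδ'0 : 0 < δ') (hδ'1 : δ' ≤ 1)
    -- (κ',δ')-admissibility of the restriction of Γ to the rows in X':
    (hrows : ∀ x ∈ X', ∀ x' ∈ X', x ≠ x' → ∃ j, Γ x j ≠ Γ x' j)
    (hcol : ∀ j : Fin N, (X'.image fun x => Γ x j).card ≤ κ')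
    (hgap : ∀ (j : Fin N), ∀ x ∈ X', ∀ x' ∈ X', Γ x j ≠ Γ x' j → δ' ≤ |Γ x j - Γ x' j|)
    (ε : ℝ) (hε : 0 ≤ ε)
    (η : ℝ) (hη : η = Real.sqrt (δ' / ((1 + 2*ε) * T * κ')))
    (D : Measure ℝ)
    (hD : D = ENNReal.ofReal η • volume.restrict (Set.Icc (0:ℝ) (1/η)))
    (xtraj : (Fin N → ℝ) → ℕ → X)
    (hmem : ∀ (α : Fin N → ℝ) (t : ℕ), xtraj α t ∈ X')
    (hmeas : ∀ (t : ℕ) (x₀ : X), MeasurableSet {α : Fin N → ℝ | xtraj α t = x₀})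
    -- ε-approximate Generalized-FTPL trajectory within X':
    (htraj : ∀ (α : Fin N → ℝ) (t : ℕ), 1 ≤ t → t ≤ T + 1 → ∀ x' ∈ X',
      (∑ τ ∈ Finset.Icc 1 (t-1), f (xtraj α t) (y τ)) + (∑ j, α j * Γ (xtraj α t) j) ≥
      (∑ τ ∈ Finset.Icc 1 (t-1), f x' (y τ)) + (∑ j, α j * Γ x' j) - ε) :
    ∫ α, (C * (Finset.univ.sup' Finset.univ_nonempty fun x => ∑ t ∈ Finset.Icc 1 T, f x (y t)) -
          ∑ t ∈ Finset.Icc 1 T, f (xtraj α t) (y t))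
        ∂(Measure.pi fun _ : Fin N => D) ≤
      3 * N * Real.sqrt ((1 + 2*ε) * T * κ' / δ') + ε * T := by
  classical
  obtain ⟨n, rfl⟩ : ∃ n, N = n + 1 := ⟨N - 1, by omega⟩
  have hT0 : (0:ℝ) < T := by exact_mod_cast hT
  have hκ0 : (0:ℝ) < κ' := by exact_mod_cast hκ'
  set K : ℝ := (1 + 2*ε) * T * κ' with hKdef
  have hKpos : 0 < K := by positivity
  have hK1 : 1 ≤ K := by
    rw [hKdef]
    have h1 : (1:ℝ) ≤ 1 + 2*ε := by linarith
    have h2 : (1:ℝ) ≤ (T:ℝ) := by exact_mod_cast hT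
    have h3 : (1:ℝ) ≤ (κ':ℝ) := by exact_mod_cast hκ'
    have h12 : (1:ℝ) ≤ (1 + 2*ε) * T := by nlinarith
    nlinarith
  have hη0 : 0 < η := hη ▸ Real.sqrt_pos.2 (div_pos hδ'0 hKpos)
  have hηη : η * η = δ' / K := by rw [hη]; exact Real.mul_self_sqrt (le_of_lt (div_pos hδ'0 hKpos))
  have hinv : 1/η = Real.sqrt (K/δ') := by
    rw [hη, one_div, ← Real.sqrt_inv, inv_div]
  have hinv1 : 1 ≤ 1/η := by
    rw [hinv]
    rw [show (1:ℝ) = Real.sqrt 1 by simp]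
    apply Real.sqrt_le_sqrt
    rw [le_div_iff₀ hδ'0]
    linarith
  set c0 : ℝ := (1 + 2*ε)/δ' with hc0def
  have hc0 : 0 ≤ c0 := by positivity
  -- the measure
  have hDIcc : D (Set.Icc 0 (1/η)) = 1 := by
    rw [hD, Measure.smul_apply, Measure.restrict_apply' measurableSet_Icc, Set.inter_self,
      Real.volume_Icc, smul_eq_mul, ← ENNReal.ofReal_mul hη0.le]
    rw [show η * (1/η - 0) = 1 by field_simp; simp]
    simp
  haveI hprobD : IsProbabilityMeasure D := by
    constructor
    rw [hD, Measure.smul_apply, Measure.restrict_apply' measurableSet_Icc, Set.univ_inter,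
      Real.volume_Icc, smul_eq_mul, ← ENNReal.ofReal_mul hη0.le]
    rw [show η * (1/η - 0) = 1 by field_simp; simp]
    simp
  set μ := Measure.pi fun _ : Fin (n+1) => D with hμdef
  haveI : IsProbabilityMeasure μ := Measure.pi.instIsProbabilityMeasure _
  -- measurability infrastructure
  have hmeasF : ∀ (t : ℕ) (F : X → ℝ), Measurable fun α : Fin (n+1) → ℝ => F (xtraj α t) := by
    intro t F
    have hrw : (fun α : Fin (n+1) → ℝ => F (xtraj α t)) =
        fun α => ∑ x₀ : X, if xtraj α t = x₀ then F x₀ else 0 := by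
      funext α
      rw [Finset.sum_ite_eq]
      simp
    rw [hrw]
    exact Finset.measurable_sum _ fun x₀ _ =>
      Measurable.ite (hmeas t x₀) measurable_const measurable_const
  have hmeasSum : ∀ (off : ℕ), Measurable fun α : Fin (n+1) → ℝ =>
      ∑ t ∈ Finset.Icc 1 T, f (xtraj α (t+off)) (y t) :=
    fun off => Finset.measurable_sum _ fun t _ => hmeasF (t+off) (fun x => f x (y t))
  have hint : ∀ (g : (Fin (n+1) → ℝ) → ℝ), Measurable g → ∀ B : ℝ, (∀ α, |g α| ≤ B) →
      Integrable g μ := fun g hg B hB =>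
    (integrable_const B).mono' hg.aestronglyMeasurable (Filter.Eventually.of_forall hB)
  -- basic bounds
  have hsumx : ∀ x : X, (∑ t ∈ Finset.Icc 1 T, f x (y t)) ∈ Set.Icc (0:ℝ) T := by
    intro x
    constructor
    · exact Finset.sum_nonneg fun t _ => (hf x (y t)).1
    · calc (∑ t ∈ Finset.Icc 1 T, f x (y t)) ≤ ∑ t ∈ Finset.Icc 1 T, 1 :=
          Finset.sum_le_sum fun t _ => (hf x (y t)).2
        _ = T := by simp [Nat.card_Icc]
  set Msup : ℝ := X'.sup' hX' fun x => ∑ t ∈ Finset.Icc 1 T, f x (y t) with hMsupdef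
  set M0 : ℝ := C * (Finset.univ.sup' Finset.univ_nonempty fun x =>
    ∑ t ∈ Finset.Icc 1 T, f x (y t)) with hM0def
  have hMsupIcc : Msup ∈ Set.Icc (0:ℝ) T := by
    obtain ⟨x0, hx0mem, hx0⟩ := Finset.exists_mem_eq_sup' hX'
      (fun x => ∑ t ∈ Finset.Icc 1 T, f x (y t))
    rw [hMsupdef, hx0]
    exact hsumx x0
  have hsupIcc : (Finset.univ.sup' Finset.univ_nonempty fun x =>
      ∑ t ∈ Finset.Icc 1 T, f x (y t)) ∈ Set.Icc (0:ℝ) T := by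
    obtain ⟨x0, hx0mem, hx0⟩ := Finset.exists_mem_eq_sup' (Finset.univ_nonempty (α := X))
      (fun x => ∑ t ∈ Finset.Icc 1 T, f x (y t))
    rw [hx0]
    exact hsumx x0
  have hM0Icc : M0 ∈ Set.Icc (0:ℝ) T := by
    constructor
    · exact mul_nonneg hC0.le hsupIcc.1
    · rw [hM0def]
      nlinarith [hsupIcc.1, hsupIcc.2]
  -- integrand and its integrability
  have hΦmeas : Measurable fun α : Fin (n+1) → ℝ =>
      M0 - ∑ t ∈ Finset.Icc 1 T, f (xtraj α t) (y t) := by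
    have := hmeasSum 0
    simp only [Nat.add_zero] at this
    exact measurable_const.sub this
  have hsumIcc : ∀ (α : Fin (n+1) → ℝ) (off : ℕ),
      (∑ t ∈ Finset.Icc 1 T, f (xtraj α (t+off)) (y t)) ∈ Set.Icc (0:ℝ) T := by
    intro α off
    constructor
    · exact Finset.sum_nonneg fun t _ => (hf _ (y t)).1
    · calc (∑ t ∈ Finset.Icc 1 T, f (xtraj α (t+off)) (y t)) ≤ ∑ t ∈ Finset.Icc 1 T, 1 :=
          Finset.sum_le_sum fun t _ => (hf _ (y t)).2
        _ = T := by simp [Nat.card_Icc]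
  have hΦint : Integrable (fun α : Fin (n+1) → ℝ =>
      M0 - ∑ t ∈ Finset.Icc 1 T, f (xtraj α t) (y t)) μ := by
    apply hint _ hΦmeas (T:ℝ)
    intro α
    have h1 := hsumIcc α 0
    simp only [Nat.add_zero] at h1
    rw [abs_le]
    constructor
    · simp only [Set.mem_Icc] at h1 hM0Icc; linarith [hM0Icc.1, h1.2]
    · simp only [Set.mem_Icc] at h1 hM0Icc; linarith [hM0Icc.2, h1.1]
  -- rewrite the RHS sqrt
  rw [show (1 + 2*ε) * (T:ℝ) * κ' / δ' = K / δ' from rfl, ← hinv]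
  have h3N : (0:ℝ) ≤ 3 * ((n:ℝ)+1) * (1/η) := by positivity
  have hcast : ((n+1 : ℕ) : ℝ) = (n:ℝ) + 1 := by push_cast; ring
  by_cases hcase : ε ≤ ((n:ℝ)+1) * (1/η)
  case neg =>
    -- trivial bound: integrand ≤ T ≤ ε T
    push_neg at hcase
    have hε1 : 1 < ε := by
      have : (1:ℝ) ≤ ((n:ℝ)+1) * (1/η) := by
        have h01 : (0:ℝ) ≤ (n:ℝ) := Nat.cast_nonneg n
        nlinarith
      linarith
    have hbound : ∫ α, (M0 - ∑ t ∈ Finset.Icc 1 T, f (xtraj α t) (y t)) ∂μ ≤ (T:ℝ) := by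
      calc ∫ α, (M0 - ∑ t ∈ Finset.Icc 1 T, f (xtraj α t) (y t)) ∂μ
          ≤ ∫ _, (T:ℝ) ∂μ := by
            apply integral_mono hΦint (integrable_const _)
            intro α
            dsimp only
            have h1 := hsumIcc α 0
            simp only [Nat.add_zero] at h1
            simp only [Set.mem_Icc] at h1
            have h2 := hM0Icc.2
            linarith [h1.1]
        _ = (T:ℝ) := by
            rw [integral_const, probReal_univ, one_smul]
    calc ∫ α, (M0 - ∑ t ∈ Finset.Icc 1 T, f (xtraj α t) (y t)) ∂μ ≤ (T:ℝ) := hbound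
      _ ≤ ε * T := by nlinarith
      _ ≤ 3 * ((n+1:ℕ):ℝ) * (1/η) + ε * T := by rw [hcast]; linarith
  case pos =>
    -- Be-the-leader bound (pointwise on the box)
    have hBTL : ∀ α : Fin (n+1) → ℝ, (∀ j, α j ∈ Set.Icc (0:ℝ) (1/η)) →
        Msup - (∑ t ∈ Finset.Icc 1 T, f (xtraj α (t+1)) (y t)) ≤
          ((n:ℝ)+1) * (1/η) + ((T:ℝ)+1) * ε := by
      intro α hα
      have key : ∀ t, t ≤ T →
          (∑ τ ∈ Finset.Icc 1 t, f (xtraj α (τ+1)) (y τ)) + (∑ j, α j * Γ (xtraj α 1) j) ≥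
          (∑ τ ∈ Finset.Icc 1 t, f (xtraj α (t+1)) (y τ)) +
            (∑ j, α j * Γ (xtraj α (t+1)) j) - (t:ℝ) * ε := by
        intro t
        induction t with
        | zero => intro _; simp
        | succ t ih =>
          intro hle
          have ih' := ih (by omega)
          have hcmp := htraj α (t+1) (by omega) (by omega) (xtraj α (t+1+1)) (hmem α (t+1+1))
          simp only [Nat.add_sub_cancel] at hcmp
          rw [Finset.sum_Icc_succ_top (by omega : 1 ≤ t + 1),
            Finset.sum_Icc_succ_top (by omega : 1 ≤ t + 1)]
          push_cast
          linarith [ih', hcmp]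
      obtain ⟨xs, hxsmem, hxs⟩ := Finset.exists_mem_eq_sup' hX'
        (fun x => ∑ t ∈ Finset.Icc 1 T, f x (y t))
      have h1 := key T le_rfl
      have h2 := htraj α (T+1) (by omega) (by omega) xs hxsmem
      simp only [Nat.add_sub_cancel] at h2
      have h3 : (∑ j, α j * Γ (xtraj α 1) j) ≤ ((n:ℝ)+1) * (1/η) := by
        calc (∑ j, α j * Γ (xtraj α 1) j) ≤ ∑ _j : Fin (n+1), (1/η) := by
              apply Finset.sum_le_sum
              intro j _
              have ha := hα j
              have hb := hΓ (xtraj α 1) j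
              simp only [Set.mem_Icc] at ha hb
              nlinarith
          _ = ((n:ℝ)+1) * (1/η) := by
              rw [Finset.sum_const, Finset.card_univ, Fintype.card_fin, nsmul_eq_mul]
              push_cast
              ring
      have h4 : 0 ≤ ∑ j, α j * Γ xs j := by
        apply Finset.sum_nonneg
        intro j _
        have ha := hα j
        have hb := hΓ xs j
        simp only [Set.mem_Icc] at ha hb
        nlinarith
      have hMs : Msup = ∑ t ∈ Finset.Icc 1 T, f xs (y t) := hxs
      rw [hMs]
      push_cast at h1
      linarith [h1, h2, h3, h4]
    -- cross-monotonicity in a single coordinate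
    have hcross : ∀ (j : Fin (n+1)) (α α' : Fin (n+1) → ℝ), (∀ k, k ≠ j → α' k = α k) →
        c0 < α' j - α j → ∀ s s', 1 ≤ s → s ≤ T+1 → 1 ≤ s' → s' ≤ T+1 →
        (s' = s ∨ s' = s + 1 ∨ s = s' + 1) →
        Γ (xtraj α s) j ≤ Γ (xtraj α' s') j := by
      intro j α α' hagree hgapj s s' hs1 hsT hs'1 hs'T hss
      have h1 := htraj α s hs1 hsT (xtraj α' s') (hmem α' s')
      have h2 := htraj α' s' hs'1 hs'T (xtraj α s) (hmem α s)
      have hpay : (∑ τ ∈ Finset.Icc 1 (s-1), f (xtraj α s) (y τ)) -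
          (∑ τ ∈ Finset.Icc 1 (s-1), f (xtraj α' s') (y τ)) +
          ((∑ τ ∈ Finset.Icc 1 (s'-1), f (xtraj α' s') (y τ)) -
          (∑ τ ∈ Finset.Icc 1 (s'-1), f (xtraj α s) (y τ))) ≤ 1 := by
        rcases hss with rfl | rfl | rfl
        · linarith
        · obtain ⟨u, rfl⟩ : ∃ u, s = u + 1 := ⟨s-1, by omega⟩
          simp only [Nat.add_sub_cancel]
          rw [Finset.sum_Icc_succ_top (by omega : 1 ≤ u + 1),
            Finset.sum_Icc_succ_top (by omega : 1 ≤ u + 1)]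
          have ha := hf (xtraj α (u+1)) (y (u+1))
          have hb := hf (xtraj α' (u+1+1)) (y (u+1))
          simp only [Set.mem_Icc] at ha hb
          linarith
        · obtain ⟨u, rfl⟩ : ∃ u, s' = u + 1 := ⟨s'-1, by omega⟩
          simp only [Nat.add_sub_cancel]
          rw [Finset.sum_Icc_succ_top (by omega : 1 ≤ u + 1),
            Finset.sum_Icc_succ_top (by omega : 1 ≤ u + 1)]
          have ha := hf (xtraj α (u+1+1)) (y (u+1))
          have hb := hf (xtraj α' (u+1)) (y (u+1))
          simp only [Set.mem_Icc] at ha hb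
          linarith
      have hdot : ∀ z : X, (∑ k, α' k * Γ z k) - (∑ k, α k * Γ z k) =
          (α' j - α j) * Γ z j := by
        intro z
        rw [← Finset.sum_sub_distrib]
        rw [Finset.sum_eq_single j]
        · ring
        · intro k _ hk
          rw [hagree k hk]
          ring
        · intro h
          exact absurd (Finset.mem_univ j) h
      have hineq : -(1 + 2*ε) ≤ (α' j - α j) * (Γ (xtraj α' s') j - Γ (xtraj α s) j) := by
        have e1 := hdot (xtraj α s)
        have e2 := hdot (xtraj α' s')
        nlinarith [h1, h2, hpay, e1, e2]
      by_contra hlt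
      push_neg at hlt
      have hne : Γ (xtraj α' s') j ≠ Γ (xtraj α s) j := ne_of_lt hlt
      have hd := hgap j (xtraj α' s') (hmem α' s') (xtraj α s) (hmem α s) hne
      rw [abs_of_neg (by linarith : Γ (xtraj α' s') j - Γ (xtraj α s) j < 0)] at hd
      -- so Γ x' j - Γ x j ≤ -δ', and α'j - αj > c0 = (1+2ε)/δ'
      have hdpos : 0 < α' j - α j := lt_of_le_of_lt hc0 hgapj
      have hc0' : c0 * δ' = 1 + 2*ε := by
        rw [hc0def]
        field_simp
      nlinarith [hineq, hgapj, hd, hdpos]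
    -- slice bound: for fixed other coordinates, the disagreement set is small
    have hslice : ∀ (t : ℕ), 1 ≤ t → t ≤ T → ∀ (j : Fin (n+1)) (b : Fin n → ℝ),
        volume ({a : ℝ | Γ (xtraj (j.insertNth a b : Fin (n+1) → ℝ) t) j ≠
            Γ (xtraj (j.insertNth a b : Fin (n+1) → ℝ) (t+1)) j} ∩ Set.Icc 0 (1/η)) ≤
          ENNReal.ofReal (κ' * c0) := by
      intro t ht1 htT j b
      apply covering_lemma c0 hc0 κ'
      · exact BddBelow.mono Set.inter_subset_right bddBelow_Icc
      · intro g hg hgaps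
        set v : ℕ → ℝ := fun i => min (Γ (xtraj (j.insertNth (g i) b : Fin (n+1) → ℝ) t) j)
          (Γ (xtraj (j.insertNth (g i) b : Fin (n+1) → ℝ) (t+1)) j) with hv
        have hmono : ∀ i, i < κ' → v i < v (i+1) := by
          intro i hi
          have hagree : ∀ k, k ≠ j → (j.insertNth (g (i+1)) b : Fin (n+1) → ℝ) k =
              (j.insertNth (g i) b : Fin (n+1) → ℝ) k := by
            intro k hk
            obtain ⟨l, rfl⟩ := Fin.exists_succAbove_eq hk
            rw [Fin.insertNth_apply_succAbove, Fin.insertNth_apply_succAbove]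
          have hgapj : c0 < (j.insertNth (g (i+1)) b : Fin (n+1) → ℝ) j -
              (j.insertNth (g i) b : Fin (n+1) → ℝ) j := by
            rw [Fin.insertNth_apply_same, Fin.insertNth_apply_same]
            linarith [hgaps i hi]
          have c1 := hcross j _ _ hagree hgapj t t (by omega) (by omega) (by omega) (by omega)
            (Or.inl rfl)
          have c2 := hcross j _ _ hagree hgapj t (t+1) (by omega) (by omega) (by omega) (by omega)
            (Or.inr (Or.inl rfl))
          have c3 := hcross j _ _ hagree hgapj (t+1) t (by omega) (by omega) (by omega) (by omega)
            (Or.inr (Or.inr rfl))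
          have c4 := hcross j _ _ hagree hgapj (t+1) (t+1) (by omega) (by omega) (by omega)
            (by omega) (Or.inl rfl)
          have hne : Γ (xtraj (j.insertNth (g i) b : Fin (n+1) → ℝ) t) j ≠
              Γ (xtraj (j.insertNth (g i) b : Fin (n+1) → ℝ) (t+1)) j := (hg i).1
          have hminmax : v i < max (Γ (xtraj (j.insertNth (g i) b : Fin (n+1) → ℝ) t) j)
              (Γ (xtraj (j.insertNth (g i) b : Fin (n+1) → ℝ) (t+1)) j) := min_lt_max.2 hne
          apply lt_min
          · exact lt_of_lt_of_le hminmax (max_le c1 c3)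
          · exact lt_of_lt_of_le hminmax (max_le c2 c4)
        have hmono' : ∀ i i', i < i' → i' ≤ κ' → v i < v i' := by
          intro i i' h hle
          induction i' with
          | zero => omega
          | succ i'' ih2 =>
            rcases Nat.lt_succ_iff_lt_or_eq.1 h with h' | rfl
            · exact lt_trans (ih2 h' (by omega)) (hmono i'' (by omega))
            · exact hmono i (by omega)
        have hsub : ∀ i, v i ∈ X'.image (fun x => Γ x j) := by
          intro i
          rcases min_cases (Γ (xtraj (j.insertNth (g i) b : Fin (n+1) → ℝ) t) j)
            (Γ (xtraj (j.insertNth (g i) b : Fin (n+1) → ℝ) (t+1)) j) with ⟨hmin, _⟩ | ⟨hmin, _⟩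
          · rw [hv]
            simp only
            rw [hmin]
            exact Finset.mem_image_of_mem _ (hmem _ t)
          · rw [hv]
            simp only
            rw [hmin]
            exact Finset.mem_image_of_mem _ (hmem _ (t+1))
        have hcard : κ' + 1 ≤ κ' := by
          have hinj : Set.InjOn v (Finset.range (κ'+1) : Finset ℕ) := by
            intro i hi i' hi' heq
            simp only [Finset.coe_range, Set.mem_Iio] at hi hi'
            by_contra hne2
            rcases Nat.lt_or_ge i i' with hlt | hge
            · exact absurd heq (ne_of_lt (hmono' i i' hlt (by omega)))
            · have : i' < i := by omega
              exact absurd heq.symm (ne_of_lt (hmono' i' i this (by omega)))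
          calc κ' + 1 = (Finset.range (κ'+1)).card := (Finset.card_range _).symm
            _ = ((Finset.range (κ'+1)).image v).card := (Finset.card_image_of_injOn hinj).symm
            _ ≤ (X'.image (fun x => Γ x j)).card := by
                apply Finset.card_le_card
                intro w hw
                obtain ⟨i, _, rfl⟩ := Finset.mem_image.1 hw
                exact hsub i
            _ ≤ κ' := hcol j
        omega
    -- measure of the column-disagreement event
    have hEmeas : ∀ (t : ℕ) (j : Fin (n+1)),
        MeasurableSet {α : Fin (n+1) → ℝ | Γ (xtraj α t) j ≠ Γ (xtraj α (t+1)) j} := by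
      intro t j
      have h1 : Measurable fun α : Fin (n+1) → ℝ => Γ (xtraj α t) j := hmeasF t (fun x => Γ x j)
      have h2 : Measurable fun α : Fin (n+1) → ℝ => Γ (xtraj α (t+1)) j :=
        hmeasF (t+1) (fun x => Γ x j)
      exact (measurableSet_eq_fun h1 h2).compl
    have hevent : ∀ (t : ℕ), 1 ≤ t → t ≤ T → ∀ j : Fin (n+1),
        μ {α | Γ (xtraj α t) j ≠ Γ (xtraj α (t+1)) j} ≤
          ENNReal.ofReal (η * (κ' * c0)) := by
      intro t ht1 htT j
      set E : Set (Fin (n+1) → ℝ) := {α | Γ (xtraj α t) j ≠ Γ (xtraj α (t+1)) j} with hE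
      set e := MeasurableEquiv.piFinSuccAbove (fun _ : Fin (n+1) => ℝ) j with he
      have hF : MeasurableSet (e.symm ⁻¹' E) := (hEmeas t j).preimage e.symm.measurable
      have hpre : E = e ⁻¹' (e.symm ⁻¹' E) := by
        ext α
        simp
      have hmp := measurePreserving_piFinSuccAbove (fun _ : Fin (n+1) => D) j
      rw [hpre, hmp.measure_preimage hF.nullMeasurableSet, Measure.prod_apply_symm hF]
      have hsliceset : ∀ b : Fin n → ℝ,
          D ((fun a => (a, b)) ⁻¹' (e.symm ⁻¹' E)) ≤ ENNReal.ofReal (η * (κ' * c0)) := by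
        intro b
        have hset : ((fun a => (a, b)) ⁻¹' (e.symm ⁻¹' E)) =
            {a : ℝ | Γ (xtraj (j.insertNth a b : Fin (n+1) → ℝ) t) j ≠
              Γ (xtraj (j.insertNth a b : Fin (n+1) → ℝ) (t+1)) j} := by
          ext a
          simp only [Set.mem_preimage, hE, Set.mem_setOf_eq, he,
            MeasurableEquiv.piFinSuccAbove_symm_apply, Fin.insertNthEquiv, Equiv.coe_fn_mk]
        rw [hset, hD, Measure.smul_apply, Measure.restrict_apply' measurableSet_Icc,
          smul_eq_mul]
        calc ENNReal.ofReal η * volume ({a : ℝ |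
              Γ (xtraj (j.insertNth a b : Fin (n+1) → ℝ) t) j ≠
              Γ (xtraj (j.insertNth a b : Fin (n+1) → ℝ) (t+1)) j} ∩ Set.Icc 0 (1/η)) ≤
            ENNReal.ofReal η * ENNReal.ofReal (κ' * c0) := by
              apply mul_le_mul_right
              exact hslice t ht1 htT j b
          _ = ENNReal.ofReal (η * (κ' * c0)) := by
              rw [← ENNReal.ofReal_mul hη0.le]
      calc (∫⁻ b, D ((fun a => (a, b)) ⁻¹' (e.symm ⁻¹' E))
              ∂(Measure.pi fun _ : Fin n => D)) ≤
          ∫⁻ _, ENNReal.ofReal (η * (κ' * c0)) ∂(Measure.pi fun _ : Fin n => D) :=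
            lintegral_mono fun b => hsliceset b
        _ = ENNReal.ofReal (η * (κ' * c0)) := by
            rw [lintegral_const, measure_univ, mul_one]
    -- per-round stability bound
    set ρ : ℝ := ((n:ℝ)+1) * (η * (κ' * c0)) with hρdef
    have hρ0 : 0 ≤ ρ := by positivity
    have hstab : ∀ t : ℕ, 1 ≤ t → t ≤ T →
        ∫ α, (f (xtraj α (t+1)) (y t) - f (xtraj α t) (y t)) ∂μ ≤ ρ := by
      intro t ht1 htT
      set U : Set (Fin (n+1) → ℝ) :=
        ⋃ j : Fin (n+1), {α | Γ (xtraj α t) j ≠ Γ (xtraj α (t+1)) j} with hU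
      have hUm : MeasurableSet U := MeasurableSet.iUnion fun j => hEmeas t j
      have hptw2 : ∀ α, f (xtraj α (t+1)) (y t) - f (xtraj α t) (y t) ≤
          U.indicator (fun _ => (1:ℝ)) α := by
        intro α
        by_cases hαU : α ∈ U
        · rw [Set.indicator_of_mem hαU]
          have ha := hf (xtraj α (t+1)) (y t)
          have hb := hf (xtraj α t) (y t)
          simp only [Set.mem_Icc] at ha hb
          linarith
        · rw [Set.indicator_of_notMem hαU]
          have hallj : ∀ j, Γ (xtraj α t) j = Γ (xtraj α (t+1)) j := by
            intro j
            by_contra hne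
            exact hαU (Set.mem_iUnion.2 ⟨j, hne⟩)
          have heqx : xtraj α t = xtraj α (t+1) := by
            by_contra hne
            obtain ⟨j, hj⟩ := hrows _ (hmem α t) _ (hmem α (t+1)) hne
            exact hj (hallj j)
          rw [heqx]
          simp
      have hμU : μ U ≤ ENNReal.ofReal ρ := by
        calc μ U ≤ ∑' j : Fin (n+1), μ {α | Γ (xtraj α t) j ≠ Γ (xtraj α (t+1)) j} :=
              measure_iUnion_le _
          _ = ∑ j : Fin (n+1), μ {α | Γ (xtraj α t) j ≠ Γ (xtraj α (t+1)) j} := tsum_fintype _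
          _ ≤ ∑ _j : Fin (n+1), ENNReal.ofReal (η * (κ' * c0)) :=
              Finset.sum_le_sum fun j _ => hevent t ht1 htT j
          _ = (n+1 : ℕ) • ENNReal.ofReal (η * (κ' * c0)) := by
              rw [Finset.sum_const, Finset.card_univ, Fintype.card_fin]
          _ = ENNReal.ofReal ((n+1 : ℕ) • (η * (κ' * c0))) := ENNReal.ofReal_nsmul.symm
          _ = ENNReal.ofReal ρ := by
              rw [hρdef, nsmul_eq_mul]
              congr 1
              push_cast
              ring
      have hdiffint : Integrable (fun α => f (xtraj α (t+1)) (y t) - f (xtraj α t) (y t)) μ := by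
        apply hint _ ((hmeasF (t+1) (fun x => f x (y t))).sub (hmeasF t (fun x => f x (y t)))) 1
        intro α
        have ha := hf (xtraj α (t+1)) (y t)
        have hb := hf (xtraj α t) (y t)
        simp only [Set.mem_Icc] at ha hb
        simp only [Pi.sub_apply]
        rw [abs_le]
        constructor <;> linarith
      calc ∫ α, (f (xtraj α (t+1)) (y t) - f (xtraj α t) (y t)) ∂μ ≤
            ∫ α, U.indicator (fun _ => (1:ℝ)) α ∂μ := by
            apply integral_mono hdiffint ((integrable_const (1:ℝ)).indicator hUm) hptw2
        _ = (μ U).toReal • (1:ℝ) := integral_indicator_const (1:ℝ) hUm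
        _ = (μ U).toReal := by rw [smul_eq_mul, mul_one]
        _ ≤ ρ := ENNReal.toReal_le_of_le_ofReal hρ0 hμU
    -- almost-everywhere box membership
    have hbox : ∀ᵐ α ∂μ, ∀ j, α j ∈ Set.Icc (0:ℝ) (1/η) := by
      have hBm : MeasurableSet (Set.pi Set.univ fun _ : Fin (n+1) => Set.Icc (0:ℝ) (1/η)) :=
        MeasurableSet.univ_pi fun _ => measurableSet_Icc
      have hB1 : μ (Set.pi Set.univ fun _ : Fin (n+1) => Set.Icc (0:ℝ) (1/η)) = 1 := by
        rw [hμdef, Measure.pi_pi]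
        have : D (Set.Icc (0:ℝ) (1/η)) = 1 := hDIcc
        rw [show Set.Icc (0:ℝ) (1/η) = Set.Icc (0:ℝ) η⁻¹ by rw [one_div]] at this
        simp [this]
      have hcompl := (prob_compl_eq_zero_iff hBm).2 hB1
      have : ∀ᵐ α ∂μ, α ∈ Set.pi Set.univ fun _ : Fin (n+1) => Set.Icc (0:ℝ) (1/η) := by
        rw [ae_iff]
        rw [show {α | ¬ α ∈ Set.pi Set.univ fun _ : Fin (n+1) => Set.Icc (0:ℝ) (1/η)} =
          (Set.pi Set.univ fun _ : Fin (n+1) => Set.Icc (0:ℝ) (1/η))ᶜ from rfl]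
        exact hcompl
      filter_upwards [this] with α hα
      intro j
      exact hα j (Set.mem_univ j)
    -- assembling the two pieces
    set G1 : (Fin (n+1) → ℝ) → ℝ :=
      fun α => Msup - ∑ t ∈ Finset.Icc 1 T, f (xtraj α (t+1)) (y t) with hG1def
    set G2 : (Fin (n+1) → ℝ) → ℝ :=
      fun α => ∑ t ∈ Finset.Icc 1 T, (f (xtraj α (t+1)) (y t) - f (xtraj α t) (y t)) with hG2def
    have hG1meas : Measurable G1 := measurable_const.sub (hmeasSum 1)
    have hG1int : Integrable G1 μ := by
      apply hint _ hG1meas (T:ℝ)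
      intro α
      have h1 := hsumIcc α 1
      simp only [Set.mem_Icc] at h1 hMsupIcc
      rw [abs_le]
      constructor
      · simp only [hG1def]; linarith [hMsupIcc.1, h1.2]
      · simp only [hG1def]; linarith [hMsupIcc.2, h1.1]
    have hG2meas : Measurable G2 :=
      Finset.measurable_sum _ fun t _ =>
        (hmeasF (t+1) (fun x => f x (y t))).sub (hmeasF t (fun x => f x (y t)))
    have hG2int : Integrable G2 μ := by
      apply hint _ hG2meas (T:ℝ)
      intro α
      have h1 := hsumIcc α 1
      have h0 := hsumIcc α 0
      simp only [Nat.add_zero] at h0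
      simp only [Set.mem_Icc] at h1 h0
      rw [hG2def]
      simp only
      rw [Finset.sum_sub_distrib, abs_le]
      constructor <;> linarith [h1.1, h1.2, h0.1, h0.2]
    have hptw3 : ∀ α, M0 - ∑ t ∈ Finset.Icc 1 T, f (xtraj α t) (y t) ≤ G1 α + G2 α := by
      intro α
      simp only [hG1def, hG2def]
      rw [Finset.sum_sub_distrib]
      linarith [hMIR]
    have hIG1 : ∫ α, G1 α ∂μ ≤ ((n:ℝ)+1) * (1/η) + ((T:ℝ)+1) * ε := by
      calc ∫ α, G1 α ∂μ ≤ ∫ _, (((n:ℝ)+1) * (1/η) + ((T:ℝ)+1) * ε) ∂μ := by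
            apply integral_mono_ae hG1int (integrable_const _)
            filter_upwards [hbox] with α hα
            exact hBTL α hα
        _ = ((n:ℝ)+1) * (1/η) + ((T:ℝ)+1) * ε := by
            rw [integral_const, probReal_univ, one_smul]
    have hIG2 : ∫ α, G2 α ∂μ ≤ (T:ℝ) * ρ := by
      have hsplitG2 : ∫ α, G2 α ∂μ = ∑ t ∈ Finset.Icc 1 T,
          ∫ α, (f (xtraj α (t+1)) (y t) - f (xtraj α t) (y t)) ∂μ := by
        rw [hG2def]
        apply integral_finset_sum
        intro t _
        apply hint _ ((hmeasF (t+1) (fun x => f x (y t))).sub (hmeasF t (fun x => f x (y t)))) 1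
        intro α
        have ha := hf (xtraj α (t+1)) (y t)
        have hb := hf (xtraj α t) (y t)
        simp only [Set.mem_Icc] at ha hb
        simp only [Pi.sub_apply]
        rw [abs_le]
        constructor <;> linarith
      rw [hsplitG2]
      calc (∑ t ∈ Finset.Icc 1 T,
            ∫ α, (f (xtraj α (t+1)) (y t) - f (xtraj α t) (y t)) ∂μ) ≤
          ∑ _t ∈ Finset.Icc 1 T, ρ := by
            apply Finset.sum_le_sum
            intro t ht
            simp only [Finset.mem_Icc] at ht
            exact hstab t ht.1 ht.2
        _ = (T:ℝ) * ρ := by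
            rw [Finset.sum_const, Nat.card_Icc, nsmul_eq_mul]
            push_cast
            ring
    have halg : (T:ℝ) * ρ = ((n:ℝ)+1) * (1/η) := by
      have hδeq : δ' = η * η * K := by
        rw [hηη]
        field_simp
      rw [hρdef, hc0def]
      rw [show δ' = η * η * K from hδeq, hKdef]
      have hε2 : (0:ℝ) < 1 + 2*ε := by linarith
      field_simp
    have hfinal : ∫ α, (M0 - ∑ t ∈ Finset.Icc 1 T, f (xtraj α t) (y t)) ∂μ ≤
        2 * (((n:ℝ)+1) * (1/η)) + ((T:ℝ)+1) * ε := by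
      calc ∫ α, (M0 - ∑ t ∈ Finset.Icc 1 T, f (xtraj α t) (y t)) ∂μ ≤
            ∫ α, (G1 α + G2 α) ∂μ := integral_mono hΦint (hG1int.add hG2int) hptw3
        _ = (∫ α, G1 α ∂μ) + ∫ α, G2 α ∂μ := integral_add hG1int hG2int
        _ ≤ (((n:ℝ)+1) * (1/η) + ((T:ℝ)+1) * ε) + (T:ℝ) * ρ := add_le_add hIG1 hIG2
        _ = 2 * (((n:ℝ)+1) * (1/η)) + ((T:ℝ)+1) * ε := by rw [halg]; ring
    calc ∫ α, (M0 - ∑ t ∈ Finset.Icc 1 T, f (xtraj α t) (y t)) ∂μ ≤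
          2 * (((n:ℝ)+1) * (1/η)) + ((T:ℝ)+1) * ε := hfinal
      _ ≤ 3 * ((n+1:ℕ):ℝ) * (1/η) + ε * T := by rw [hcast]; linarith [hcase]
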